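/- Let L be a finite-dimensional complex Lie algebra with a nondegenerate symmetric ℂ-bilinear form B, and let g and g̃ both be real slices of (L,B). Then there exists a Cartan involution of Lie algebras of the restriction of B to g if and only if there exists a Cartan involution of Lie algebras of the restriction of B to g̃. -/

import Mathlib

/-!
Setup: a finite-dimensional complex Lie algebra `L` with a nondegenerate symmetric
`ℂ`-bilinear form `B` (a "holomorphic inner product"), viewed also as a real Lie algebra.
-/

variable {L : Type*} [LieRing L] [LieAlgebra ℂ L]

/-- A complex Lie algebra is in particular a real Lie algebra. -/
noncomputable instance instLieAlgebraRealOfComplex : LieAlgebra ℝ L :=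
  { (inferInstance : Module ℝ L) with
    lie_smul := fun t x y => by
      rw [show t • y = (t : ℂ) • y from rfl, lie_smul,
        show (t : ℂ) • ⁅x, y⁆ = t • ⁅x, y⁆ from rfl] }

/-- `g` is a real form of the complex Lie algebra `L`:
`g ∩ i • g = {0}` and `g + i • g = L`. -/
def IsRealForm (g : LieSubalgebra ℝ L) : Prop :=
  (∀ x ∈ g, ∀ y ∈ g, x = Complex.I • y → x = 0) ∧
  (∀ z : L, ∃ x ∈ g, ∃ y ∈ g, z = x + Complex.I • y)

/-- `g` is a real slice of `(L, B)`: a real form of `L` on which `B` is real-valued. -/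
def IsRealSlice (B : LinearMap.BilinForm ℂ L) (g : LieSubalgebra ℝ L) : Prop :=
  IsRealForm g ∧ ∀ x ∈ g, ∀ y ∈ g, (B x y).im = 0

/-- A compact real form of `(L, B)`: a real slice on which `B` is positive definite. -/
def IsCompactRealForm (B : LinearMap.BilinForm ℂ L) (u : LieSubalgebra ℝ L) : Prop :=
  IsRealSlice B u ∧ ∀ x ∈ u, x ≠ 0 → 0 < (B x x).re

/-- A Cartan involution of the metric `B|g`: an `ℝ`-linear involution `θ` of `g` such that
`(x, y) ↦ B x (θ y)` is a positive-definite (real-valued, symmetric) inner product on `g`. -/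
def IsCartanInvolutionOfMetric (B : LinearMap.BilinForm ℂ L) (g : LieSubalgebra ℝ L)
    (θ : ↥g →ₗ[ℝ] ↥g) : Prop :=
  (∀ x, θ (θ x) = x) ∧
  (∀ x y : ↥g, B (θ x : L) (y : L) = B (x : L) (θ y : L)) ∧
  (∀ x : ↥g, x ≠ 0 → 0 < (B (x : L) (θ x : L)).re)

/-- A Cartan involution of Lie algebras of the metric `B|g`: a Cartan involution of the
metric which is moreover a Lie algebra automorphism of `g`. -/
def IsCartanInvolutionOfLieAlgebras (B : LinearMap.BilinForm ℂ L) (g : LieSubalgebra ℝ L)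
    (θ : ↥g →ₗ[ℝ] ↥g) : Prop :=
  IsCartanInvolutionOfMetric B g θ ∧ ∀ x y : ↥g, θ ⁅x, y⁆ = ⁅θ x, θ y⁆

namespace RSAux

section decomp
/- (identical to w1, elided here, will merge) -/
noncomputable def emap (g : LieSubalgebra ℝ L) : (↥g × ↥g) →ₗ[ℝ] L where
  toFun p := (p.1 : L) + Complex.I • (p.2 : L)
  map_add' p q := by
    have h1 : ((p + q).1 : L) = (p.1 : L) + (q.1 : L) := rfl
    have h2 : ((p + q).2 : L) = (p.2 : L) + (q.2 : L) := rfl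
    show ((p+q).1 : L) + Complex.I • ((p+q).2 : L) = _
    rw [h1, h2, smul_add]; abel
  map_smul' t p := by
    have h1 : ((t • p).1 : L) = t • (p.1 : L) := rfl
    have h2 : ((t • p).2 : L) = t • (p.2 : L) := rfl
    show ((t • p).1 : L) + Complex.I • ((t • p).2 : L) = _
    rw [h1, h2, RingHom.id_apply]
    show _ = t • ((p.1 : L) + Complex.I • (p.2 : L))
    rw [smul_add, smul_comm]

lemma emap_apply (g : LieSubalgebra ℝ L) (p : ↥g × ↥g) :
    emap g p = (p.1 : L) + Complex.I • (p.2 : L) := rfl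

lemma emap_inj {g : LieSubalgebra ℝ L} (hg : IsRealForm g) :
    Function.Injective (emap g) := by
  intro p q h
  simp only [emap_apply] at h
  have h1 : ((p.1 - q.1 : ↥g) : L) = Complex.I • ((q.2 - p.2 : ↥g) : L) := by
    push_cast
    rw [smul_sub, sub_eq_sub_iff_add_eq_add, h]
    abel
  have h2 := hg.1 _ (p.1 - q.1).2 _ (q.2 - p.2).2 h1
  have hp1 : p.1 = q.1 := by
    have : p.1 - q.1 = 0 := Subtype.ext (by simpa using h2)
    exact sub_eq_zero.mp this
  have hq2 : ((q.2 - p.2 : ↥g) : L) = 0 := by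
    have hI : Complex.I • ((q.2 - p.2 : ↥g) : L) = 0 := h1 ▸ h2
    rcases smul_eq_zero.mp hI with h | h
    · exact absurd h Complex.I_ne_zero
    · exact h
  have hp2 : p.2 = q.2 := by
    have : q.2 - p.2 = 0 := Subtype.ext (by simpa using hq2)
    exact (sub_eq_zero.mp this).symm
  exact Prod.ext hp1 hp2

lemma emap_surj {g : LieSubalgebra ℝ L} (hg : IsRealForm g) :
    Function.Surjective (emap g) := by
  intro z
  obtain ⟨x, hx, y, hy, hz⟩ := hg.2 z
  exact ⟨(⟨x, hx⟩, ⟨y, hy⟩), hz.symm⟩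

noncomputable def eEq {g : LieSubalgebra ℝ L} (hg : IsRealForm g) : (↥g × ↥g) ≃ₗ[ℝ] L :=
  LinearEquiv.ofBijective (emap g) ⟨emap_inj hg, emap_surj hg⟩

lemma eEq_apply {g : LieSubalgebra ℝ L} (hg : IsRealForm g) (p : ↥g × ↥g) :
    eEq hg p = (p.1 : L) + Complex.I • (p.2 : L) := rfl

lemma eEq_symm_apply {g : LieSubalgebra ℝ L} (hg : IsRealForm g) (a b : ↥g) :
    (eEq hg).symm ((a : L) + Complex.I • (b : L)) = (a, b) := by
  rw [LinearEquiv.symm_apply_eq]; rfl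

lemma exists_decomp {g : LieSubalgebra ℝ L} (hg : IsRealForm g) (x : L) :
    ∃ a b : ↥g, x = (a : L) + Complex.I • (b : L) ∧ (eEq hg).symm x = (a, b) := by
  refine ⟨((eEq hg).symm x).1, ((eEq hg).symm x).2, ?_, rfl⟩
  conv_lhs => rw [← (eEq hg).apply_symm_apply x]
  rfl

end decomp

/-- Expansion of a Lie bracket along the decomposition. -/
lemma bracket_decomp {g : LieSubalgebra ℝ L} (a b c d : ↥g) :
    ⁅(a : L) + Complex.I • (b : L), (c : L) + Complex.I • (d : L)⁆
      = ((⁅a, c⁆ - ⁅b, d⁆ : ↥g) : L)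
        + Complex.I • ((⁅a, d⁆ + ⁅b, c⁆ : ↥g) : L) := by
  push_cast
  simp only [LieSubalgebra.coe_bracket, lie_add, add_lie, lie_smul, smul_lie, smul_smul,
    Complex.I_mul_I, smul_add, smul_sub, neg_one_smul]
  abel

/-- Expansion of `B` along the decomposition. -/
lemma B_decomp (B : LinearMap.BilinForm ℂ L) {g : LieSubalgebra ℝ L} (a b c d : ↥g) :
    B ((a : L) + Complex.I • (b : L)) ((c : L) + Complex.I • (d : L))
      = (B a c - B b d) + Complex.I * (B a d + B b c) := by
  simp only [map_add, map_smul, LinearMap.add_apply, LinearMap.smul_apply, smul_eq_mul]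
  linear_combination (B b d : ℂ) * Complex.I_sq

/-- The antilinear map `a + i b ↦ f a - i (f b)` associated to `f : g → g`. -/
noncomputable def conjMap {g : LieSubalgebra ℝ L} (hg : IsRealForm g)
    (f : ↥g →ₗ[ℝ] ↥g) : L →ₗ[ℝ] L :=
  (emap g) ∘ₗ (f.prodMap (-f)) ∘ₗ ((eEq hg).symm : L →ₗ[ℝ] ↥g × ↥g)

lemma conjMap_apply {g : LieSubalgebra ℝ L} (hg : IsRealForm g)
    (f : ↥g →ₗ[ℝ] ↥g) (a b : ↥g) :
    conjMap hg f ((a : L) + Complex.I • (b : L))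
      = ((f a : L)) + Complex.I • ((-(f b) : ↥g) : L) := by
  simp only [conjMap, LinearMap.coe_comp, Function.comp_apply, LinearEquiv.coe_coe,
    eEq_symm_apply, LinearMap.prodMap_apply, LinearMap.neg_apply, emap_apply]

end RSAux

namespace RSAux2
open RSAux

variable {g : LieSubalgebra ℝ L}

lemma conjMap_conjMap (hg : IsRealForm g) (f : ↥g →ₗ[ℝ] ↥g)
    (hf : ∀ v, f (f v) = v) (x : L) : conjMap hg f (conjMap hg f x) = x := by
  obtain ⟨a, b, hx, -⟩ := exists_decomp hg x
  rw [hx, conjMap_apply, conjMap_apply, hf a, map_neg, hf b, neg_neg]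

lemma conjMap_lie (hg : IsRealForm g) (f : ↥g →ₗ[ℝ] ↥g)
    (hf : ∀ v w, f ⁅v, w⁆ = ⁅f v, f w⁆) (x y : L) :
    conjMap hg f ⁅x, y⁆ = ⁅conjMap hg f x, conjMap hg f y⁆ := by
  obtain ⟨a, b, hx, -⟩ := exists_decomp hg x
  obtain ⟨c, d, hy, -⟩ := exists_decomp hg y
  rw [hx, hy, bracket_decomp, conjMap_apply, conjMap_apply, conjMap_apply, bracket_decomp]
  have h1 : f (⁅a, c⁆ - ⁅b, d⁆) = ⁅f a, f c⁆ - ⁅-(f b), -(f d)⁆ := by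
    simp [map_sub, hf, lie_neg, neg_lie]
  have h2 : -(f (⁅a, d⁆ + ⁅b, c⁆)) = ⁅f a, -(f d)⁆ + ⁅-(f b), f c⁆ := by
    simp [map_add, hf, lie_neg, neg_lie]
    abel
  rw [h1, h2]

lemma conjMap_B (B : LinearMap.BilinForm ℂ L) (hg : IsRealSlice B g)
    (f : ↥g →ₗ[ℝ] ↥g) (hfB : ∀ u v : ↥g, B ↑(f u) ↑(f v) = B ↑u ↑v) (x y : L) :
    B (conjMap hg.1 f x) (conjMap hg.1 f y) = (starRingEnd ℂ) (B x y) := by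
  have him : ∀ u v : ↥g, (starRingEnd ℂ) (B ↑u ↑v) = B ↑u ↑v := fun u v =>
    Complex.conj_eq_iff_im.2 (hg.2 _ u.2 _ v.2)
  obtain ⟨a, b, hx, -⟩ := exists_decomp hg.1 x
  obtain ⟨c, d, hy, -⟩ := exists_decomp hg.1 y
  rw [hx, hy, conjMap_apply, conjMap_apply, B_decomp, B_decomp]
  simp only [map_add, map_sub, map_mul, Complex.conj_I, him]
  push_cast
  simp only [map_neg, LinearMap.neg_apply, hfB]
  ring

lemma conjMap_id_apply (hg : IsRealForm g) {x : L} (hx : x ∈ g) :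
    conjMap hg LinearMap.id x = x := by
  have hdec : x = ((⟨x, hx⟩ : ↥g) : L) + Complex.I • ((0 : ↥g) : L) := by simp
  rw [hdec, conjMap_apply]
  simp

lemma mem_of_conjMap_id (hg : IsRealForm g) {x : L}
    (hfix : conjMap hg LinearMap.id x = x) : x ∈ g := by
  obtain ⟨a, b, hx, -⟩ := exists_decomp hg x
  rw [hx, conjMap_apply] at hfix
  have heq : emap g (a, -b) = emap g (a, b) := by
    simpa [emap_apply] using hfix
  have hb : b = 0 := by
    have h2 : (2 : ℝ) • b = 0 := by
      have hbb : -b = b := congrArg Prod.snd (emap_inj hg heq)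
      rw [two_smul]
      nth_rewrite 1 [← hbb]
      simp
    simpa using (smul_eq_zero.mp h2).resolve_left (by norm_num)
  rw [hx, hb]
  simpa using a.2

/-- A "compact conjugation" of `(L, B)`. -/
def IsCConj (B : LinearMap.BilinForm ℂ L) (τ : L →ₗ[ℝ] L) : Prop :=
  (∀ x, τ (τ x) = x) ∧
  (∀ x y, τ ⁅x, y⁆ = ⁅τ x, τ y⁆) ∧
  (∀ x y, B (τ x) (τ y) = (starRingEnd ℂ) (B x y)) ∧
  (∀ x, x ≠ 0 → 0 < (B x (τ x)).re)

lemma isCConj_of_cartan (B : LinearMap.BilinForm ℂ L) (hBsymm : ∀ x y : L, B x y = B y x)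
    (hg : IsRealSlice B g) {θ : ↥g →ₗ[ℝ] ↥g}
    (hθ : IsCartanInvolutionOfLieAlgebras B g θ) :
    IsCConj B (conjMap hg.1 θ) := by
  obtain ⟨⟨hinv, hsym, hpos⟩, hlie⟩ := hθ
  have hBθ : ∀ u v : ↥g, B ↑(θ u) ↑(θ v) = B ↑u ↑v := fun u v => by rw [hsym, hinv]
  refine ⟨conjMap_conjMap _ _ hinv, conjMap_lie _ _ hlie, conjMap_B B hg _ hBθ, ?_⟩
  intro x hx0
  obtain ⟨a, b, hx, -⟩ := exists_decomp hg.1 x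
  have hee : B x (conjMap hg.1 θ x) = B ↑a ↑(θ a) + B ↑b ↑(θ b) := by
    nth_rewrite 2 [hx]
    rw [hx, conjMap_apply, B_decomp]
    push_cast
    simp only [map_neg, LinearMap.neg_apply]
    have hz : B ↑b ↑(θ a) = B ↑a ↑(θ b) := by rw [hBsymm (b : L), hsym]
    rw [hz]
    ring
  have key : ∀ u : ↥g, 0 ≤ (B ↑u ↑(θ u)).re := fun u => by
    rcases eq_or_ne u 0 with h | h
    · simp [h]
    · exact (hpos u h).le
  have hab : a ≠ 0 ∨ b ≠ 0 := by
    by_contra hc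
    push_neg at hc
    apply hx0
    rw [hx, hc.1, hc.2]
    simp
  rw [hee, Complex.add_re]
  rcases hab with ha | hb
  · exact add_pos_of_pos_of_nonneg (hpos a ha) (key b)
  · exact add_pos_of_nonneg_of_pos (key a) (hpos b hb)

end RSAux2


section Spec
open scoped RealInnerProductSpace

lemma spec_powers {E : Type*} [NormedAddCommGroup E] [InnerProductSpace ℝ E]
    [FiniteDimensional ℝ E] (P Pinv : E →ₗ[ℝ] E) (hsymm : P.IsSymmetric)
    (hPinv1 : ∀ x, Pinv (P x) = x) (hPinv2 : ∀ x, P (Pinv x) = x)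
    (hpos : ∀ x, x ≠ 0 → 0 < ⟪x, P x⟫) :
    ∃ Aop : ℝ → (E →ₗ[ℝ] E),
      (∀ s t x, Aop s (Aop t x) = Aop (s + t) x) ∧
      (∀ x, Aop 0 x = x) ∧
      (∀ x, Aop 1 x = P x) ∧
      (∀ (t : ℝ) (C : E →ₗ[ℝ] E), (∀ x, C (P x) = P (C x)) →
        ∀ x, C (Aop t x) = Aop t (C x)) ∧
      (∀ (t : ℝ) (C : E →ₗ[ℝ] E), (∀ x, C (P x) = Pinv (C x)) →
        ∀ x, C (Aop t x) = Aop (-t) (C x)) ∧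
      (∀ (t : ℝ) (F : E →ₗ[ℝ] E →ₗ[ℝ] E), (∀ x y, P (F x y) = F (P x) (P y)) →
        ∀ x y, Aop t (F x y) = F (Aop t x) (Aop t y)) ∧
      (∀ (t : ℝ) (N : Type) (_ : AddCommGroup N) (_ : Module ℝ N) (_ : NoZeroSMulDivisors ℝ N)
        (F : E →ₗ[ℝ] E →ₗ[ℝ] N), (∀ x y, F (P x) y = F x (Pinv y)) →
        ∀ x y, F (Aop t x) (Aop t y) = F x y) := by
  classical
  set n := Module.finrank ℝ E with hn
  set b : OrthonormalBasis (Fin n) ℝ E := hsymm.eigenvectorBasis rfl with hbdef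
  set μ : Fin n → ℝ := hsymm.eigenvalues rfl with hμdef
  have hb : ∀ i, P (b i) = μ i • b i := fun i => by
    exact_mod_cast hsymm.apply_eigenvectorBasis rfl i
  have hbne : ∀ i, b i ≠ 0 := fun i => by
    intro h
    have := b.orthonormal.1 i
    rw [h] at this
    simp at this
  have hμpos : ∀ i, 0 < μ i := by
    intro i
    have h1 : ⟪b i, P (b i)⟫ = μ i := by
      rw [hb i, real_inner_smul_right, real_inner_self_eq_norm_sq, b.orthonormal.1 i]
      ring
    have := hpos (b i) (hbne i)
    linarith
  set Aop : ℝ → E →ₗ[ℝ] E := fun t =>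
    { toFun := fun x => ∑ i, (μ i ^ t * ⟪b i, x⟫) • b i
      map_add' := by
        intro x y
        simp only [inner_add_right, mul_add, add_smul, Finset.sum_add_distrib]
      map_smul' := by
        intro r x
        simp only [real_inner_smul_right, RingHom.id_apply, Finset.smul_sum, smul_smul]
        congr 1
        ext i
        ring_nf } with hAdef
  have hAapp : ∀ t x, Aop t x = ∑ i, (μ i ^ t * ⟪b i, x⟫) • b i := fun t x => rfl
  -- the key scalar computation
  have scalar : ∀ (t c : ℝ) (x : E), P x = c • x → Aop t x = c ^ t • x := by
    intro t c x hx
    have hcoef : ∀ i, μ i ^ t * ⟪b i, x⟫ = c ^ t * ⟪b i, x⟫ := by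
      intro i
      rcases eq_or_ne ⟪b i, x⟫ 0 with h | h
      · rw [h, mul_zero, mul_zero]
      · have h1 : μ i * ⟪b i, x⟫ = c * ⟪b i, x⟫ := by
          have h2 := hsymm (b i) x
          rw [hb i, hx] at h2
          rwa [real_inner_smul_left, real_inner_smul_right] at h2
        rw [mul_right_cancel₀ h h1]
    calc Aop t x = ∑ i, (c ^ t * ⟪b i, x⟫) • b i := by
          rw [hAapp]
          exact Finset.sum_congr rfl fun i _ => by rw [hcoef i]
      _ = c ^ t • ∑ i, ⟪b i, x⟫ • b i := by
          rw [Finset.smul_sum]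
          exact Finset.sum_congr rfl fun i _ => by rw [smul_smul]
      _ = c ^ t • x := by rw [b.sum_repr']
  have hAb : ∀ (t : ℝ) i, Aop t (b i) = μ i ^ t • b i := fun t i => scalar t (μ i) (b i) (hb i)
  -- extensionality helper
  have ext1 : ∀ (f g : E →ₗ[ℝ] E), (∀ i, f (b i) = g (b i)) → ∀ x, f x = g x := by
    intro f g h x
    exact DFunLike.congr_fun
      (b.toBasis.ext (by simpa [OrthonormalBasis.coe_toBasis] using h)) x
  refine ⟨Aop, ?_, ?_, ?_, ?_, ?_, ?_, ?_⟩
  · -- sum law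
    intro s t x
    refine ext1 ((Aop s) ∘ₗ (Aop t)) (Aop (s + t)) (fun i => ?_) x
    simp only [LinearMap.comp_apply, hAb, map_smul, smul_smul]
    rw [← Real.rpow_add (hμpos i)]
    ring_nf
  · -- Aop 0 = id
    intro x
    refine ext1 (Aop 0) LinearMap.id (fun i => ?_) x
    simp [hAb, Real.rpow_zero]
  · -- Aop 1 = P
    intro x
    refine ext1 (Aop 1) P (fun i => ?_) x
    simp [hAb, Real.rpow_one, hb]
  · -- commuting maps
    intro t C hC x
    refine ext1 (C ∘ₗ Aop t) (Aop t ∘ₗ C) (fun i => ?_) x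
    have hPC : P (C (b i)) = μ i • C (b i) := by
      rw [← hC, hb i, map_smul]
    simp only [LinearMap.comp_apply, hAb, map_smul, scalar t (μ i) (C (b i)) hPC]
  · -- anticommuting maps
    intro t C hC x
    refine ext1 (C ∘ₗ Aop t) (Aop (-t) ∘ₗ C) (fun i => ?_) x
    have hPC : P (C (b i)) = (μ i)⁻¹ • C (b i) := by
      have h1 : Pinv (C (b i)) = μ i • C (b i) := by
        rw [← hC, hb i, map_smul]
      have h2 : C (b i) = μ i • P (C (b i)) := by
        conv_lhs => rw [← hPinv2 (C (b i)), h1, map_smul]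
      rw [eq_comm, inv_smul_eq_iff₀ (hμpos i).ne']
      exact h2
    have h3 := scalar (-t) ((μ i)⁻¹) (C (b i)) hPC
    rw [Real.rpow_neg (inv_nonneg.mpr (hμpos i).le), Real.inv_rpow (hμpos i).le, inv_inv] at h3
    simp only [LinearMap.comp_apply, hAb, map_smul, h3]
  · -- bilinear equivariance (Lie bracket type)
    intro t F hF x y
    have key : ∀ i j, Aop t (F (b i) (b j)) = F (Aop t (b i)) (Aop t (b j)) := by
      intro i j
      have hFij : P (F (b i) (b j)) = (μ i * μ j) • F (b i) (b j) := by
        rw [hF, hb i, hb j]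
        simp only [map_smul, LinearMap.smul_apply, smul_smul]
        rw [mul_comm]
      rw [scalar t (μ i * μ j) _ hFij, hAb, hAb]
      simp only [map_smul, LinearMap.smul_apply, smul_smul]
      rw [Real.mul_rpow (hμpos i).le (hμpos j).le, mul_comm]
    have hmap : F.compr₂ (Aop t) = (F ∘ₗ Aop t).compl₂ (Aop t) :=
      b.toBasis.ext fun i => b.toBasis.ext fun j => by
        simpa [OrthonormalBasis.coe_toBasis, LinearMap.compr₂_apply,
          LinearMap.compl₂_apply] using key i j
    simpa [LinearMap.compr₂_apply, LinearMap.compl₂_apply] using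
      DFunLike.congr_fun (DFunLike.congr_fun hmap x) y
  · -- bilinear invariance (B type)
    intro t N _ _ _ F hF x y
    have hPinvb : ∀ j, Pinv (b j) = (μ j)⁻¹ • b j := by
      intro j
      have h1 := hPinv1 (b j)
      conv_lhs at h1 => rw [hb j, map_smul]
      rw [eq_comm, inv_smul_eq_iff₀ (hμpos j).ne']
      exact h1.symm
    have key : ∀ i j, F (Aop t (b i)) (Aop t (b j)) = F (b i) (b j) := by
      intro i j
      have hpair : (μ i) • F (b i) (b j) = (μ j)⁻¹ • F (b i) (b j) := by
        have h1 := hF (b i) (b j)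
        rw [hb i, hPinvb j] at h1
        simp only [map_smul, LinearMap.smul_apply] at h1
        exact h1
      rw [hAb, hAb]
      simp only [map_smul, LinearMap.smul_apply, smul_smul]
      rcases eq_or_ne (F (b i) (b j)) 0 with h0 | h0
      · rw [h0, smul_zero]
      · have hij : μ i = (μ j)⁻¹ := by
          have h2 : (μ i - (μ j)⁻¹) • F (b i) (b j) = 0 := by
            rw [sub_smul, hpair, sub_self]
          rcases smul_eq_zero.mp h2 with h | h
          · exact sub_eq_zero.mp h
          · exact absurd h h0
        rw [hij, Real.inv_rpow (hμpos j).le,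
          mul_inv_cancel₀ (Real.rpow_pos_of_pos (hμpos j) t).ne', one_smul]
    have hmap : (F ∘ₗ Aop t).compl₂ (Aop t) = F :=
      b.toBasis.ext fun i => b.toBasis.ext fun j => by
        simpa [OrthonormalBasis.coe_toBasis, LinearMap.compl₂_apply] using key i j
    simpa [LinearMap.compl₂_apply] using DFunLike.congr_fun (DFunLike.congr_fun hmap x) y

end Spec

namespace RSAux3
open RSAux RSAux2
open scoped RealInnerProductSpace

lemma cartan_of_isCConj [FiniteDimensional ℂ L] (B : LinearMap.BilinForm ℂ L)
    (hBsymm : ∀ x y : L, B x y = B y x) {g' : LieSubalgebra ℝ L} (hg' : IsRealSlice B g')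
    {τ : L →ₗ[ℝ] L} (hτ : IsCConj B τ) :
    ∃ θ : ↥g' →ₗ[ℝ] ↥g', IsCartanInvolutionOfLieAlgebras B g' θ := by
  obtain ⟨hτ2, hτlie, hτB, hτpos⟩ := hτ
  set σ : L →ₗ[ℝ] L := conjMap hg'.1 LinearMap.id with hσdef
  have hσ2 : ∀ x, σ (σ x) = x := conjMap_conjMap hg'.1 _ (fun v => rfl)
  have hσlie : ∀ x y, σ ⁅x, y⁆ = ⁅σ x, σ y⁆ := conjMap_lie hg'.1 _ (fun v w => rfl)
  have hσB : ∀ x y, B (σ x) (σ y) = (starRingEnd ℂ) (B x y) :=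
    conjMap_B B hg' _ (fun u v => rfl)
  have hσfix : ∀ x ∈ g', σ x = x := fun x hx => conjMap_id_apply hg'.1 hx
  have hσmem : ∀ x : L, σ x = x → x ∈ g' := fun x hx => mem_of_conjMap_id hg'.1 hx
  have hτB' : ∀ x y, B (τ x) y = (starRingEnd ℂ) (B x (τ y)) := by
    intro x y
    conv_lhs => rw [← hτ2 y]
    rw [hτB x (τ y)]
  have hσB' : ∀ x y, B (σ x) y = (starRingEnd ℂ) (B x (σ y)) := by
    intro x y
    conv_lhs => rw [← hσ2 y]
    rw [hσB x (σ y)]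
  set φ : L →ₗ[ℝ] L := σ ∘ₗ τ with hφdef
  set ψ : L →ₗ[ℝ] L := τ ∘ₗ σ with hψdef
  have hψφ : ∀ x, ψ (φ x) = x := fun x => by
    show τ (σ (σ (τ x))) = x
    rw [hσ2, hτ2]
  have hφψ : ∀ x, φ (ψ x) = x := fun x => by
    show σ (τ (τ (σ x))) = x
    rw [hτ2, hσ2]
  -- the Hermitian inner product associated to τ
  letI core : InnerProductSpace.Core ℝ L :=
    { inner := fun x y => (B x (τ y)).re
      conj_inner_symm := fun x y => by
        simp only [starRingEnd_apply, star_trivial]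
        have h1 : B y (τ x) = (starRingEnd ℂ) (B x (τ y)) := by
          rw [hBsymm (y : L), hτB']
        show (B y (τ x)).re = (B x (τ y)).re
        rw [h1, Complex.conj_re]
      re_inner_nonneg := fun x => by
        rcases eq_or_ne x 0 with h | h
        · simp [h]
        · exact (hτpos x h).le
      add_left := fun x y z => by
        simp only [map_add, LinearMap.add_apply, Complex.add_re]
      smul_left := fun x y r => by
        simp only [starRingEnd_apply, star_trivial]
        show ((B ((r : ℂ) • x)) (τ y)).re = r * (B x (τ y)).re
        rw [map_smul, LinearMap.smul_apply, smul_eq_mul, Complex.re_ofReal_mul]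
      definite := fun x hx => by
        by_contra h
        exact (hτpos x h).ne' hx }
  letI : NormedAddCommGroup L := core.toNormedAddCommGroup
  letI : InnerProductSpace ℝ L := InnerProductSpace.ofCore core.toCore
  have hinner : ∀ x y : L, ⟪x, y⟫ = (B x (τ y)).re := fun x y => rfl
  set P : L →ₗ[ℝ] L := φ ∘ₗ φ with hPdef
  set Pinv : L →ₗ[ℝ] L := ψ ∘ₗ ψ with hPinvdef
  have hPinv1 : ∀ x, Pinv (P x) = x := fun x => by
    show ψ (ψ (φ (φ x))) = x
    rw [hψφ, hψφ]
  have hPinv2 : ∀ x, P (Pinv x) = x := fun x => by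
    show φ (φ (ψ (ψ x))) = x
    rw [hφψ, hφψ]
  have hφinj : ∀ x, φ x = 0 → x = 0 := fun x h => by
    rw [← hψφ x, h, map_zero]
  have hφB : ∀ x y, B (φ x) (τ y) = B x (τ (φ y)) := by
    intro x y
    show B (σ (τ x)) (τ y) = _
    rw [hσB', hτB', Complex.conj_conj]
    rfl
  have hφinner : ∀ x y, ⟪φ x, y⟫ = ⟪x, φ y⟫ := fun x y => by
    rw [hinner, hinner, hφB]
  have hPsymm : P.IsSymmetric := by
    intro x y
    show ⟪φ (φ x), y⟫ = ⟪x, φ (φ y)⟫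
    rw [hφinner, hφinner]
  have hPpos : ∀ x, x ≠ 0 → 0 < ⟪x, P x⟫ := by
    intro x hx
    have h1 : ⟪x, P x⟫ = ⟪φ x, φ x⟫ := by
      show ⟪x, φ (φ x)⟫ = _
      rw [← hφinner]
    rw [h1, hinner]
    exact hτpos (φ x) (fun h => hx (hφinj x h))
  obtain ⟨Aop, hsum, hzero, hone, hcomm, hanti, hlieA, hBAs⟩ :=
    spec_powers P Pinv hPsymm hPinv1 hPinv2 hPpos
  -- intertwining relations
  have hτP : ∀ x, τ (P x) = Pinv (τ x) := fun x => rfl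
  have hσP : ∀ x, σ (P x) = Pinv (σ x) := fun x => by
    show σ (σ (τ (σ (τ x)))) = τ (σ (τ (σ (σ x))))
    rw [hσ2, hσ2]
  have hφP : ∀ x, φ (P x) = P (φ x) := fun x => rfl
  have hψP : ∀ x, ψ (P x) = P (ψ x) := fun x => by
    show ψ (φ (φ x)) = φ (φ (ψ x))
    rw [hψφ, hφψ]
  set A : L →ₗ[ℝ] L := Aop (1/4 : ℝ) with hAdef
  set A' : L →ₗ[ℝ] L := Aop (-(1/4) : ℝ) with hA'def
  have hA'A : ∀ x, A' (A x) = x := fun x => by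
    rw [hAdef, hA'def, hsum, show (-(1/4 : ℝ)) + 1/4 = 0 by norm_num, hzero]
  have hAA' : ∀ x, A (A' x) = x := fun x => by
    rw [hAdef, hA'def, hsum, show (1/4 : ℝ) + -(1/4) = 0 by norm_num, hzero]
  have hτA : ∀ x, τ (A x) = A' (τ x) := fun x => by
    have := hanti (1/4) τ hτP x
    rwa [hAdef, hA'def]
  have hτA' : ∀ x, τ (A' x) = A (τ x) := fun x => by
    have := hanti (-(1/4)) τ hτP x
    rwa [neg_neg] at this
  have hσA : ∀ x, σ (A x) = A' (σ x) := fun x => by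
    have := hanti (1/4) σ hσP x
    rwa [hAdef, hA'def]
  have hσA' : ∀ x, σ (A' x) = A (σ x) := fun x => by
    have := hanti (-(1/4)) σ hσP x
    rwa [neg_neg] at this
  have hφA : ∀ x, φ (A x) = A (φ x) := fun x => hcomm (1/4) φ hφP x
  have hφA' : ∀ x, φ (A' x) = A' (φ x) := fun x => hcomm (-(1/4)) φ hφP x
  have hψA : ∀ x, ψ (A x) = A (ψ x) := fun x => hcomm (1/4) ψ hψP x
  -- Lie bracket equivariance
  set Fbr : L →ₗ[ℝ] L →ₗ[ℝ] L := LinearMap.mk₂ ℝ (fun x y => ⁅x, y⁆)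
    (fun x y z => add_lie x y z) (fun r x y => smul_lie r x y)
    (fun x y z => lie_add x y z) (fun r x y => lie_smul r x y) with hFbrdef
  have hPbr : ∀ x y, P (Fbr x y) = Fbr (P x) (P y) := by
    intro x y
    simp only [hFbrdef, LinearMap.mk₂_apply]
    show σ (τ (σ (τ ⁅x, y⁆))) = _
    rw [hτlie, hσlie, hτlie, hσlie]
    rfl
  have hAbr : ∀ x y, A ⁅x, y⁆ = ⁅A x, A y⁆ := by
    intro x y
    have := hlieA (1/4) Fbr hPbr x y
    simpa only [hFbrdef, LinearMap.mk₂_apply] using this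
  have hA'br : ∀ x y, A' ⁅x, y⁆ = ⁅A' x, A' y⁆ := by
    intro x y
    have := hlieA (-(1/4)) Fbr hPbr x y
    simpa only [hFbrdef, LinearMap.mk₂_apply] using this
  -- B invariance
  set FB : L →ₗ[ℝ] L →ₗ[ℝ] ℂ := LinearMap.mk₂ ℝ (fun x y => B x y)
    (fun x y z => by simp only [map_add, LinearMap.add_apply])
    (fun r x y => by
      show (B ((r : ℂ) • x)) y = r • (B x) y
      rw [map_smul, LinearMap.smul_apply, smul_eq_mul, Complex.real_smul])
    (fun x y z => by simp only [map_add])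
    (fun r x y => by
      show (B x) ((r : ℂ) • y) = r • (B x) y
      rw [map_smul, smul_eq_mul, Complex.real_smul]) with hFBdef
  have hPB : ∀ x y, FB (P x) y = FB x (Pinv y) := by
    intro x y
    simp only [hFBdef, LinearMap.mk₂_apply]
    calc B (σ (τ (σ (τ x)))) y
        = (starRingEnd ℂ) (B (τ (σ (τ x))) (σ y)) := hσB' _ _
      _ = (starRingEnd ℂ) ((starRingEnd ℂ) (B (σ (τ x)) (τ (σ y)))) := by rw [hτB']
      _ = B (σ (τ x)) (τ (σ y)) := Complex.conj_conj _
      _ = (starRingEnd ℂ) (B (τ x) (σ (τ (σ y)))) := hσB' _ _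
      _ = (starRingEnd ℂ) ((starRingEnd ℂ) (B x (τ (σ (τ (σ y)))))) := by rw [hτB']
      _ = B x (τ (σ (τ (σ y)))) := Complex.conj_conj _
  have hBA : ∀ x y, B (A x) (A y) = B x y := by
    intro x y
    have := hBAs (1/4) ℂ inferInstance inferInstance inferInstance FB hPB x y
    simpa only [hFBdef, LinearMap.mk₂_apply] using this
  have hBA' : ∀ x y, B (A' x) (A' y) = B x y := by
    intro x y
    have := hBAs (-(1/4)) ℂ inferInstance inferInstance inferInstance FB hPB x y
    simpa only [hFBdef, LinearMap.mk₂_apply] using this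
  -- the aligned compact conjugation
  set τ' : L →ₗ[ℝ] L := A ∘ₗ τ ∘ₗ A' with hτ'def
  have hτ'app : ∀ x, τ' x = A (τ (A' x)) := fun x => rfl
  have hτ'2 : ∀ x, τ' (τ' x) = x := by
    intro x
    rw [hτ'app, hτ'app, hA'A, hτ2, hAA']
  have hτ'B : ∀ x y, B (τ' x) (τ' y) = (starRingEnd ℂ) (B x y) := by
    intro x y
    rw [hτ'app, hτ'app, hBA, hτB, hBA']
  have hτ'B' : ∀ x y, B (τ' x) y = (starRingEnd ℂ) (B x (τ' y)) := by
    intro x y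
    conv_lhs => rw [← hτ'2 y]
    rw [hτ'B x (τ' y)]
  have hBxA : ∀ u v, B u (A v) = B (A' u) v := by
    intro u v
    conv_lhs => rw [← hAA' u]
    rw [hBA]
  have hτ'pos : ∀ x, x ≠ 0 → 0 < (B x (τ' x)).re := by
    intro x hx
    rw [hτ'app, hBxA]
    exact hτpos (A' x) (fun h => hx (by rw [← hAA' x, h, map_zero]))
  have hτ'lie : ∀ x y, τ' ⁅x, y⁆ = ⁅τ' x, τ' y⁆ := by
    intro x y
    rw [hτ'app, hτ'app, hτ'app, hA'br, hτlie, hAbr]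
  -- commutation with σ
  have hPψ : ∀ x, P (ψ x) = φ x := fun x => by
    show φ (φ (ψ x)) = φ x
    rw [hφψ]
  have hστ' : ∀ x, σ (τ' x) = τ' (σ x) := by
    intro x
    have e1 : (-(1/4 : ℝ)) + -(1/4) = -(1/2) := by norm_num
    have e2 : (-(1/2 : ℝ)) + 1 = 1/2 := by norm_num
    have e3 : (1/4 : ℝ) + 1/4 = 1/2 := by norm_num
    calc σ (τ' x) = A' (σ (τ (A' x))) := by rw [hτ'app, hσA]
      _ = A' (φ (A' x)) := rfl
      _ = A' (A' (φ x)) := by rw [hφA']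
      _ = Aop (-(1/2)) (φ x) := by rw [hA'def, hsum, e1]
      _ = Aop (-(1/2)) (P (ψ x)) := by rw [hPψ]
      _ = Aop (-(1/2)) (Aop 1 (ψ x)) := by rw [hone]
      _ = Aop (1/2) (ψ x) := by rw [hsum, e2]
      _ = A (A (ψ x)) := by rw [hAdef, hsum, e3]
      _ = A (ψ (A x)) := by rw [hψA]
      _ = A (τ (σ (A x))) := rfl
      _ = A (τ (A' (σ x))) := by rw [hσA]
      _ = τ' (σ x) := (hτ'app _).symm
  have hmem : ∀ x : ↥g', τ' (x : L) ∈ g' := by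
    intro x
    apply hσmem
    rw [hστ', hσfix _ x.2]
  -- the Cartan involution on g'
  set θ : ↥g' →ₗ[ℝ] ↥g' :=
    { toFun := fun x => ⟨τ' (x : L), hmem x⟩
      map_add' := fun x y => by
        apply Subtype.ext
        show τ' ((x : L) + (y : L)) = τ' (x : L) + τ' (y : L)
        exact map_add τ' _ _
      map_smul' := fun r x => by
        apply Subtype.ext
        show τ' (r • (x : L)) = r • τ' (x : L)
        exact map_smul τ' _ _ } with hθdef
  refine ⟨θ, ⟨⟨fun x => ?_, fun x y => ?_, fun x hx => ?_⟩, fun x y => ?_⟩⟩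
  · -- involution
    apply Subtype.ext
    show τ' (τ' (x : L)) = (x : L)
    exact hτ'2 _
  · -- symmetry
    show B (τ' (x : L)) (y : L) = B (x : L) (τ' (y : L))
    rw [hτ'B']
    exact Complex.conj_eq_iff_im.2 (hg'.2 _ x.2 _ (hmem y))
  · -- positivity
    show 0 < (B (x : L) (τ' (x : L))).re
    refine hτ'pos (x : L) (fun h => hx ?_)
    exact Subtype.ext (by simpa using h)
  · -- Lie automorphism
    apply Subtype.ext
    show τ' ((⁅x, y⁆ : ↥g') : L) = ((⁅θ x, θ y⁆ : ↥g') : L)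
    rw [LieSubalgebra.coe_bracket, LieSubalgebra.coe_bracket]
    exact hτ'lie _ _

end RSAux3

/-- If `g` and `g̃` are real slices of `(L, B)`, then there exists a Cartan
involution of Lie algebras of `B|g` if and only if there exists one of `B|g̃`. -/
theorem cartanInvolution_iff_of_isRealSlice [FiniteDimensional ℂ L]
    (B : LinearMap.BilinForm ℂ L) (hBsymm : ∀ x y : L, B x y = B y x)
    (hBnd : B.Nondegenerate) (g g' : LieSubalgebra ℝ L)
    (hg : IsRealSlice B g) (hg' : IsRealSlice B g') :
    (∃ θ : ↥g →ₗ[ℝ] ↥g, IsCartanInvolutionOfLieAlgebras B g θ) ↔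
      ∃ θ : ↥g' →ₗ[ℝ] ↥g', IsCartanInvolutionOfLieAlgebras B g' θ := by
  constructor
  · rintro ⟨θ, hθ⟩
    exact RSAux3.cartan_of_isCConj B hBsymm hg' (RSAux2.isCConj_of_cartan B hBsymm hg hθ)
  · rintro ⟨θ, hθ⟩
    exact RSAux3.cartan_of_isCConj B hBsymm hg (RSAux2.isCConj_of_cartan B hBsymm hg' hθ)
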